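/- Let φ be any measurable function Ω_Θ → [0,1] with ∫ φ π dμ = 1 − α, and let φ* be the generalized HPD credible set with threshold κ_α and credible level 1 − α. If additionally ∫ φ dμ = ∫ φ* dμ (φ is also smallest) and μ({π = κ_α}) = 0, then φ = 1_{π > κ_α} μ-almost everywhere. -/

import Mathlib

open MeasureTheory ENNReal

/-- When the threshold level set is `μ`-null, the unique smallest generalized
credible set of level `1 - α` is almost everywhere the indicator of
`{θ | π θ > κ_α}`, i.e. the classical highest posterior density credible
set. -/
theorem smallest_is_indicator_of_null_level_set
    {Ω : Type*} [MeasurableSpace Ω] (μ : Measure Ω) [SigmaFinite μ]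
    (π φstar φ : Ω → ℝ≥0∞)
    (hπm : Measurable π) (hπ1 : ∫⁻ θ, π θ ∂μ = 1)
    (hφsm : Measurable φstar) (hφm : Measurable φ)
    (hφs1 : ∀ θ, φstar θ ≤ 1) (hφ1 : ∀ θ, φ θ ≤ 1)
    (κα : ℝ≥0∞) (hκpos : 0 < κα) (hκfin : κα ≠ ∞)
    (α : ℝ) (hα0 : 0 < α) (hα1 : α < 1)
    (hup : ∀ θ, κα < π θ → φstar θ = 1)
    (hdown : ∀ θ, π θ < κα → φstar θ = 0)
    (hlevs : ∫⁻ θ, φstar θ * π θ ∂μ = ENNReal.ofReal (1 - α))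
    (hlev : ∫⁻ θ, φ θ * π θ ∂μ = ENNReal.ofReal (1 - α))
    (hsize : ∫⁻ θ, φ θ ∂μ = ∫⁻ θ, φstar θ ∂μ)
    (hnull : μ {θ | π θ = κα} = 0) :
    ∀ᵐ θ ∂μ, φ θ = Set.indicator {θ | κα < π θ} (fun _ => (1 : ℝ≥0∞)) θ := by
  set A := {θ | κα < π θ} with hAdef
  set B := {θ | π θ < κα} with hBdef
  have hA : MeasurableSet A := measurableSet_lt measurable_const hπm
  have hB : MeasurableSet B := measurableSet_lt hπm measurable_const
  have hC : MeasurableSet {θ | π θ = κα} := hπm (measurableSet_singleton κα)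
  have hAc : Aᶜ = B ∪ {θ | π θ = κα} := by
    ext θ
    simp only [Set.mem_compl_iff, Set.mem_setOf_eq, Set.mem_union, hAdef, hBdef, not_lt]
    constructor
    · intro h; rcases lt_or_eq_of_le h with h' | h'
      · exact Or.inl h'
      · exact Or.inr h'
    · rintro (h | h)
      · exact le_of_lt h
      · exact le_of_eq h
  have split : ∀ f : Ω → ℝ≥0∞,
      ∫⁻ θ, f θ ∂μ = ∫⁻ θ in A, f θ ∂μ + ∫⁻ θ in B, f θ ∂μ := by
    intro f
    have hdisj : Disjoint B {θ | π θ = κα} :=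
      Set.disjoint_left.mpr fun θ h h' => absurd h' (ne_of_lt h)
    have h1 : ∫⁻ θ in B ∪ {θ | π θ = κα}, f θ ∂μ = ∫⁻ θ in B, f θ ∂μ := by
      rw [lintegral_union hC hdisj, setLIntegral_measure_zero _ _ hnull, add_zero]
    rw [← lintegral_add_compl f hA, hAc, h1]
  set L := ENNReal.ofReal (1 - α) with hLdef
  have hLfin : L ≠ ∞ := ENNReal.ofReal_ne_top
  -- φstar integrals over A and B
  have e1 : ∫⁻ θ in A, φstar θ * π θ ∂μ = ∫⁻ θ in A, π θ ∂μ :=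
    setLIntegral_congr_fun hA (fun θ hθ => by show φstar θ * π θ = π θ; rw [hup θ hθ, one_mul])
  have e2 : ∫⁻ θ in B, φstar θ * π θ ∂μ = 0 := by
    have := setLIntegral_congr_fun (μ := μ) (f := fun θ => φstar θ * π θ)
      (g := fun _ => 0) hB (fun θ hθ => by show φstar θ * π θ = 0; rw [hdown θ hθ, zero_mul])
    simpa using this
  have e3 : ∫⁻ θ in A, φstar θ ∂μ = μ A := by
    rw [setLIntegral_congr_fun (g := fun _ => 1) hA
      (fun θ hθ => show φstar θ = 1 from hup θ hθ), setLIntegral_one]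
  have e4 : ∫⁻ θ in B, φstar θ ∂μ = 0 := by
    have := setLIntegral_congr_fun (μ := μ) (f := φstar) (g := fun _ => 0) hB
      (fun θ hθ => show φstar θ = 0 from hdown θ hθ)
    simpa using this
  -- consequences of the three integral hypotheses
  have hAπ : ∫⁻ θ in A, π θ ∂μ = L := by
    have h := hlevs
    rw [split (fun θ => φstar θ * π θ), e1, e2, add_zero] at h
    exact h
  have hlev' : ∫⁻ θ in A, φ θ * π θ ∂μ + ∫⁻ θ in B, φ θ * π θ ∂μ = L := by
    rw [← split (fun θ => φ θ * π θ)]; exact hlev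
  have hsize' : ∫⁻ θ in A, φ θ ∂μ + ∫⁻ θ in B, φ θ ∂μ = μ A := by
    rw [← split φ]
    rw [split φstar, e3, e4, add_zero] at hsize
    exact hsize
  -- finiteness facts
  have hμAfin : μ A ≠ ∞ := by
    intro h
    have h1 : κα * μ A ≤ L := by
      rw [← hAπ, ← setLIntegral_const A κα]
      exact setLIntegral_mono' hA fun θ hθ => le_of_lt hθ
    rw [h, ENNReal.mul_top hκpos.ne'] at h1
    exact hLfin (top_le_iff.mp h1)
  have hφπ_le_π : ∀ θ, φ θ * π θ ≤ π θ := fun θ => by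
    calc φ θ * π θ ≤ 1 * π θ := mul_le_mul_left (hφ1 θ) _
    _ = π θ := one_mul _
  have hAφπfin : ∫⁻ θ in A, φ θ * π θ ∂μ ≠ ∞ := by
    intro h
    have : ∫⁻ θ in A, φ θ * π θ ∂μ ≤ L := by
      rw [← hAπ]; exact lintegral_mono fun θ => hφπ_le_π θ
    rw [h] at this; exact hLfin (top_le_iff.mp this)
  have hAφfin : ∫⁻ θ in A, φ θ ∂μ ≠ ∞ := by
    intro h
    have : ∫⁻ θ in A, φ θ ∂μ ≤ μ A := by
      calc ∫⁻ θ in A, φ θ ∂μ ≤ ∫⁻ θ in A, 1 ∂μ := lintegral_mono fun θ => hφ1 θ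
      _ = μ A := setLIntegral_one A
    rw [h] at this; exact hμAfin (top_le_iff.mp this)
  have hA1φfin : ∫⁻ θ in A, (1 - φ θ) ∂μ ≠ ∞ := by
    intro h
    have : ∫⁻ θ in A, (1 - φ θ) ∂μ ≤ μ A := by
      calc ∫⁻ θ in A, (1 - φ θ) ∂μ ≤ ∫⁻ θ in A, 1 ∂μ :=
        lintegral_mono fun θ => tsub_le_self
      _ = μ A := setLIntegral_one A
    rw [h] at this; exact hμAfin (top_le_iff.mp this)
  -- cancellations
  have hadd1 : ∫⁻ θ in A, φ θ ∂μ + ∫⁻ θ in A, (1 - φ θ) ∂μ = μ A := by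
    rw [← lintegral_add_left hφm]
    rw [setLIntegral_congr_fun (g := fun _ => 1) hA
      (fun θ _ => show φ θ + (1 - φ θ) = 1 from add_tsub_cancel_of_le (hφ1 θ)), setLIntegral_one]
  have hBφ : ∫⁻ θ in B, φ θ ∂μ = ∫⁻ θ in A, (1 - φ θ) ∂μ :=
    (ENNReal.add_right_inj hAφfin).mp (hsize'.trans hadd1.symm)
  have hadd2 : ∫⁻ θ in A, φ θ * π θ ∂μ + ∫⁻ θ in A, (1 - φ θ) * π θ ∂μ
      = ∫⁻ θ in A, π θ ∂μ := by
    rw [← lintegral_add_left (f := fun θ => φ θ * π θ) (hφm.mul hπm)]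
    refine setLIntegral_congr_fun hA (fun θ _ => ?_)
    show φ θ * π θ + (1 - φ θ) * π θ = π θ
    rw [← add_mul, add_tsub_cancel_of_le (hφ1 θ), one_mul]
  have hBφπ : ∫⁻ θ in B, φ θ * π θ ∂μ = ∫⁻ θ in A, (1 - φ θ) * π θ ∂μ := by
    refine (ENNReal.add_right_inj hAφπfin).mp ?_
    rw [hlev', hadd2, hAπ]
  -- the two key quantities X and Y
  set X := ∫⁻ θ in A, (1 - φ θ) * π θ ∂μ with hXdef
  set Y := ∫⁻ θ in A, (1 - φ θ) * κα ∂μ with hYdef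
  have hYeq : Y = (∫⁻ θ in A, (1 - φ θ) ∂μ) * κα := by
    rw [hYdef, lintegral_mul_const κα (f := fun θ => 1 - φ θ) (measurable_const.sub hφm)]
  have hBφκ : ∫⁻ θ in B, φ θ * κα ∂μ = Y := by
    rw [lintegral_mul_const κα hφm, hBφ, hYeq]
  have hYX : Y ≤ X :=
    setLIntegral_mono' hA fun θ hθ => mul_le_mul_right (le_of_lt hθ) _
  have hXY : X ≤ Y := by
    rw [← hBφπ, ← hBφκ]
    exact setLIntegral_mono' hB fun θ hθ => mul_le_mul_right (le_of_lt hθ) _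
  have hXeqY : X = Y := le_antisymm hXY hYX
  have hXfin : X ≠ ∞ := by
    intro h
    have : X ≤ L := by
      rw [← hAπ, hXdef]
      refine lintegral_mono fun θ => ?_
      calc (1 - φ θ) * π θ ≤ 1 * π θ := mul_le_mul_left tsub_le_self _
      _ = π θ := one_mul _
    rw [h] at this; exact hLfin (top_le_iff.mp this)
  have hYfin : Y ≠ ∞ := hXeqY ▸ hXfin
  -- the A-side difference integrates to zero
  have hZA : ∫⁻ θ in A, ((1 - φ θ) * π θ - (1 - φ θ) * κα) ∂μ = 0 := by
    rw [lintegral_sub (f := fun θ => (1 - φ θ) * π θ) (g := fun θ => (1 - φ θ) * κα) ((measurable_const.sub hφm).mul_const κα) hYfin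
      ((ae_restrict_iff' hA).mpr (ae_of_all _ fun θ hθ =>
        mul_le_mul_right (le_of_lt hθ) _))]
    exact tsub_eq_zero_iff_le.mpr hXY
  have hZB : ∫⁻ θ in B, (φ θ * κα - φ θ * π θ) ∂μ = 0 := by
    have hBπfin : ∫⁻ θ in B, φ θ * π θ ∂μ ≠ ∞ := by rw [hBφπ]; exact hXfin
    rw [lintegral_sub (f := fun θ => φ θ * κα) (g := fun θ => φ θ * π θ) (hφm.mul hπm) hBπfin
      ((ae_restrict_iff' hB).mpr (ae_of_all _ fun θ hθ =>
        mul_le_mul_right (le_of_lt hθ) _))]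
    have key : ∫⁻ θ in B, φ θ * κα ∂μ ≤ ∫⁻ θ in B, φ θ * π θ ∂μ := by
      rw [hBφκ, hBφπ]; exact hXeqY.ge
    exact tsub_eq_zero_iff_le.mpr key
  -- a.e. pointwise conclusions on A and B
  have haeA : ∀ᵐ θ ∂μ, θ ∈ A → φ θ = 1 := by
    have h0 := (lintegral_eq_zero_iff
      (((measurable_const.sub hφm).mul hπm).sub
        ((measurable_const.sub hφm).mul_const κα))).mp hZA
    rw [Filter.EventuallyEq, ae_restrict_iff' hA] at h0
    filter_upwards [h0] with θ hθ hθA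
    have h1 : (1 - φ θ) * π θ ≤ (1 - φ θ) * κα := tsub_eq_zero_iff_le.mp (hθ hθA)
    by_contra hne
    have hpos : 1 - φ θ ≠ 0 := by
      intro h
      exact hne (le_antisymm (hφ1 θ) (tsub_eq_zero_iff_le.mp h))
    have hfin : 1 - φ θ ≠ ∞ :=
      (lt_of_le_of_lt tsub_le_self ENNReal.one_lt_top).ne
    have : (1 - φ θ) * κα < (1 - φ θ) * π θ :=
      (ENNReal.mul_lt_mul_iff_right hpos hfin).mpr hθA
    exact absurd h1 (not_le.mpr this)
  have haeB : ∀ᵐ θ ∂μ, θ ∈ B → φ θ = 0 := by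
    have h0 := (lintegral_eq_zero_iff
      ((hφm.mul_const κα).sub (hφm.mul hπm))).mp hZB
    rw [Filter.EventuallyEq, ae_restrict_iff' hB] at h0
    filter_upwards [h0] with θ hθ hθB
    have h1 : φ θ * κα ≤ φ θ * π θ := tsub_eq_zero_iff_le.mp (hθ hθB)
    by_contra hne
    have hfin : φ θ ≠ ∞ := (lt_of_le_of_lt (hφ1 θ) ENNReal.one_lt_top).ne
    have : φ θ * π θ < φ θ * κα :=
      (ENNReal.mul_lt_mul_iff_right hne hfin).mpr hθB
    exact absurd h1 (not_le.mpr this)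
  have haeC : ∀ᵐ θ ∂μ, π θ ≠ κα := by
    rw [ae_iff]
    simpa using hnull
  filter_upwards [haeA, haeB, haeC] with θ h1 h2 h3
  rcases lt_trichotomy (π θ) κα with hlt | heq | hgt
  · rw [h2 hlt, Set.indicator_of_notMem (by simpa [hAdef] using le_of_lt hlt)]
  · exact absurd heq h3
  · rw [h1 hgt, Set.indicator_of_mem (by simpa [hAdef] using hgt)]
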